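/- Let A be an n×n real matrix for which there exist M > 0 and λ > 0 such that ‖exp(tA)‖ ≤ M·e^{−λt} for all t ≥ 0, let τ > 0, let R be an n×n real matrix, and set L := fromBlocks A R 0 (−(1/τ)·I). Then there exist M′ > 0 and μ > 0 such that ‖exp(tL)‖ ≤ M′·e^{−μt} for all t ≥ 0; i.e., the augmented dynamics of the colored-noise linear system is exponentially stable whenever the original dynamics is. -/

import Mathlib

open Matrix NormedSpace
open scoped Matrix.Norms.L2Operator

set_option maxHeartbeats 1000000
set_option linter.unusedSectionVars false

namespace AugAux

noncomputable instance normedAlgebraRatMat {m : Type*} [Fintype m] [DecidableEq m] :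
    NormedAlgebra ℚ (Matrix m m ℝ) where
  norm_smul_le q x := by
    rw [← smul_one_smul ℝ q x, Rat.smul_one_eq_cast, norm_smul, Rat.norm_cast_real]

lemma norm_one_le_mat {m : Type*} [Fintype m] [DecidableEq m] :
    ‖(1 : Matrix m m ℝ)‖ ≤ 1 := by
  rw [Matrix.cstar_norm_def]
  rw [show (toEuclideanCLM (n := m) (𝕜 := ℝ)) 1 = 1 from _root_.map_one _, ContinuousLinearMap.one_def]
  exact ContinuousLinearMap.norm_id_le

variable {𝔸 : Type*} [NormedRing 𝔸] [NormedAlgebra ℝ 𝔸] [CompleteSpace 𝔸]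

lemma norm_exp_le (h1 : ‖(1:𝔸)‖ ≤ 1) (x : 𝔸) : ‖exp x‖ ≤ Real.exp ‖x‖ := by
  rw [exp_eq_tsum ℝ]
  have hsum1 := norm_expSeries_summable' (𝕂 := ℝ) x
  have hsum2 : Summable (fun n : ℕ => ‖x‖ ^ n / n.factorial) := Real.summable_pow_div_factorial ‖x‖
  have h2 : Real.exp ‖x‖ = ∑' n : ℕ, ‖x‖ ^ n / n.factorial := by
    rw [Real.exp_eq_exp_ℝ, exp_eq_tsum_div]
  rw [h2]
  refine (norm_tsum_le_tsum_norm hsum1).trans ?_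
  refine Summable.tsum_le_tsum (fun m => ?_) hsum1 hsum2
  rw [norm_smul]
  have hfac : ‖((m.factorial : ℝ))⁻¹‖ = ((m.factorial : ℝ))⁻¹ := by
    rw [Real.norm_eq_abs, abs_of_nonneg]; positivity
  rw [hfac, div_eq_inv_mul]
  have hpow : ‖x ^ m‖ ≤ ‖x‖ ^ m := by
    rcases Nat.eq_zero_or_pos m with hm | hm
    · subst hm; simpa using h1
    · exact norm_pow_le' x hm
  exact mul_le_mul_of_nonneg_left hpow (by positivity)

lemma exp_smul_one (c : ℝ) : exp (c • (1:𝔸)) = Real.exp c • (1:𝔸) := by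
  rw [← Algebra.algebraMap_eq_smul_one,
    ← algebraMap_exp_comm, ← Real.exp_eq_exp_ℝ,
    Algebra.algebraMap_eq_smul_one]



noncomputable def Phi (n : ℕ) :
    (Matrix (Fin n) (Fin n) ℝ × Matrix (Fin n) (Fin n) ℝ) →ₐ[ℝ]
      Matrix (Fin n ⊕ Fin n) (Fin n ⊕ Fin n) ℝ where
  toFun p := Matrix.fromBlocks p.1 0 0 p.2
  map_one' := Matrix.fromBlocks_one
  map_mul' p q := by
    simp [Matrix.fromBlocks_multiply]
  map_zero' := Matrix.fromBlocks_zero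
  map_add' p q := by
    simp [Matrix.fromBlocks_add]
  commutes' r := by
    simp [Algebra.algebraMap_eq_smul_one, Matrix.fromBlocks_smul, ← Matrix.fromBlocks_one]

lemma exp_fromBlocks_diag (n : ℕ) (B C : Matrix (Fin n) (Fin n) ℝ) :
    exp (Matrix.fromBlocks B 0 0 C : Matrix (Fin n ⊕ Fin n) (Fin n ⊕ Fin n) ℝ) =
      Matrix.fromBlocks (exp B) 0 0 (exp C) := by
  have hc : Continuous (Phi n) := by
    exact LinearMap.continuous_of_finiteDimensional (Phi n).toLinearMap
  have h := map_exp (Phi n) hc (B, C)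
  have hexp : exp ((B, C) : Matrix (Fin n) (Fin n) ℝ × Matrix (Fin n) (Fin n) ℝ) =
      (exp B, exp C) := Prod.ext (Prod.fst_exp _) (Prod.snd_exp _)
  rw [hexp] at h
  exact h.symm

noncomputable def e₁ (n : ℕ) :
    Matrix (Fin n) (Fin n) ℝ →L[ℝ] Matrix (Fin n ⊕ Fin n) (Fin n ⊕ Fin n) ℝ :=
  LinearMap.toContinuousLinearMap
    { toFun := fun B => Matrix.fromBlocks B 0 0 0
      map_add' := fun B B' => by simp [Matrix.fromBlocks_add]
      map_smul' := fun c B => by simp [Matrix.fromBlocks_smul] }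

noncomputable def e₂ (n : ℕ) :
    Matrix (Fin n) (Fin n) ℝ →L[ℝ] Matrix (Fin n ⊕ Fin n) (Fin n ⊕ Fin n) ℝ :=
  LinearMap.toContinuousLinearMap
    { toFun := fun C => Matrix.fromBlocks 0 0 0 C
      map_add' := fun C C' => by simp [Matrix.fromBlocks_add]
      map_smul' := fun c C => by simp [Matrix.fromBlocks_smul] }

lemma norm_fromBlocks_diag_le (n : ℕ) (B C : Matrix (Fin n) (Fin n) ℝ) :
    ‖(Matrix.fromBlocks B 0 0 C : Matrix (Fin n ⊕ Fin n) (Fin n ⊕ Fin n) ℝ)‖ ≤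
      ‖e₁ n‖ * ‖B‖ + ‖e₂ n‖ * ‖C‖ := by
  have h : (Matrix.fromBlocks B 0 0 C : Matrix (Fin n ⊕ Fin n) (Fin n ⊕ Fin n) ℝ)
      = e₁ n B + e₂ n C := by
    simp [e₁, e₂, Matrix.fromBlocks_add]
  rw [h]
  exact (norm_add_le _ _).trans (add_le_add ((e₁ n).le_opNorm B) ((e₂ n).le_opNorm C))

end AugAux

/-- If the original dynamics `A` is exponentially stable, then so is the augmented dynamics
`L = fromBlocks A R 0 (−(1/τ)·I)` of the colored-noise linear system. -/
theorem augmented_dynamics_exponentially_stable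
    (n : ℕ) (A R : Matrix (Fin n) (Fin n) ℝ) (τ : ℝ) (hτ : 0 < τ)
    (hA : ∃ M > (0:ℝ), ∃ l > (0:ℝ), ∀ t ≥ (0:ℝ), ‖exp (t • A)‖ ≤ M * Real.exp (-l * t)) :
    ∃ M' > (0:ℝ), ∃ μ > (0:ℝ), ∀ t ≥ (0:ℝ),
      ‖exp (t • Matrix.fromBlocks A R 0 (-(1/τ) • (1 : Matrix (Fin n) (Fin n) ℝ)))‖ ≤
        M' * Real.exp (-μ * t) := by
  classical
  obtain ⟨M, hM, l, hl, hMA⟩ := hA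
  set Dm : Matrix (Fin n) (Fin n) ℝ := -(1/τ) • (1 : Matrix (Fin n) (Fin n) ℝ) with hDm
  set L : Matrix (Fin n ⊕ Fin n) (Fin n ⊕ Fin n) ℝ := Matrix.fromBlocks A R 0 Dm with hL
  set D₀ : Matrix (Fin n ⊕ Fin n) (Fin n ⊕ Fin n) ℝ := Matrix.fromBlocks A 0 0 Dm with hD₀
  set N₀ : Matrix (Fin n ⊕ Fin n) (Fin n ⊕ Fin n) ℝ := Matrix.fromBlocks 0 R 0 0 with hN₀
  set K₁ : ℝ := ‖AugAux.e₁ n‖ with hK₁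
  set K₂ : ℝ := ‖AugAux.e₂ n‖ with hK₂
  -- exp of T • D₀
  have hD₀exp : ∀ T : ℝ, exp (T • D₀) =
      Matrix.fromBlocks (exp (T • A)) 0 0 (Real.exp (-(1/τ) * T) • 1) := by
    intro T
    have h1 : T • D₀ = Matrix.fromBlocks (T • A) 0 0 (T • Dm) := by
      rw [hD₀, Matrix.fromBlocks_smul]; simp
    rw [h1, AugAux.exp_fromBlocks_diag]
    congr 1
    rw [hDm]
    have h2 : T • (-(1/τ) • (1 : Matrix (Fin n) (Fin n) ℝ))
        = (-(1/τ) * T) • (1 : Matrix (Fin n) (Fin n) ℝ) := by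
      rw [smul_smul, mul_comm]
    rw [h2, AugAux.exp_smul_one]
  have hD₀norm : ∀ T : ℝ, ‖exp (T • D₀)‖ ≤
      K₁ * ‖exp (T • A)‖ + K₂ * Real.exp (-(1/τ) * T) := by
    intro T
    rw [hD₀exp T]
    refine (AugAux.norm_fromBlocks_diag_le n _ _).trans ?_
    have h3 : ‖Real.exp (-(1/τ)*T) • (1 : Matrix (Fin n) (Fin n) ℝ)‖ ≤ Real.exp (-(1/τ)*T) := by
      rw [norm_smul, Real.norm_eq_abs, abs_of_pos (Real.exp_pos _)]
      nlinarith [AugAux.norm_one_le_mat (m := Fin n), Real.exp_pos (-(1/τ)*T)]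
    have h4 : (0:ℝ) ≤ K₂ := by rw [hK₂]; exact ContinuousLinearMap.opNorm_nonneg _
    nlinarith [mul_le_mul_of_nonneg_left h3 h4]
  -- choose T
  have htend : Filter.Tendsto
      (fun T : ℝ => K₁ * M * Real.exp (-l * T) + K₂ * Real.exp (-(1/τ) * T))
      Filter.atTop (nhds 0) := by
    have h0 : ∀ a : ℝ, 0 < a →
        Filter.Tendsto (fun T : ℝ => Real.exp (-a * T)) Filter.atTop (nhds 0) := by
      intro a ha
      have h1 : Filter.Tendsto (fun T : ℝ => a * T) Filter.atTop Filter.atTop := by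
        exact Filter.Tendsto.const_mul_atTop ha Filter.tendsto_id
      have h2 := Real.tendsto_exp_neg_atTop_nhds_zero.comp h1
      refine h2.congr fun T => ?_
      simp [Function.comp, neg_mul]
    have := ((h0 l hl).const_mul (K₁ * M)).add ((h0 (1/τ) (by positivity)).const_mul K₂)
    simpa using this
  obtain ⟨T, hT4, hT1⟩ :=
    ((htend.eventually (gt_mem_nhds (show (0:ℝ) < 1/4 by norm_num))).and
      (Filter.eventually_ge_atTop (1:ℝ))).exists
  have hTpos : (0:ℝ) < T := lt_of_lt_of_le one_pos hT1
  have hexpD₀T : ‖exp (T • D₀)‖ ≤ 1/4 := by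
    refine (hD₀norm T).trans ?_
    have h5 := hMA T hTpos.le
    have h6 : (0:ℝ) ≤ K₁ := by rw [hK₁]; exact ContinuousLinearMap.opNorm_nonneg _
    nlinarith [mul_le_mul_of_nonneg_left h5 h6]
  -- continuity δ
  obtain ⟨δ, hδ, hδ4⟩ := Metric.continuousAt_iff.mp
    ((exp_continuous (𝔸 := Matrix (Fin n ⊕ Fin n) (Fin n ⊕ Fin n) ℝ)).continuousAt (x := T • D₀)) (1/4) (by norm_num)
  set c : ℝ := T * ‖N₀‖ / δ + 1 with hc
  have hcpos : 0 < c := by positivity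
  set S : Matrix (Fin n ⊕ Fin n) (Fin n ⊕ Fin n) ℝ := Matrix.fromBlocks 1 0 0 (c • 1) with hS
  set S' : Matrix (Fin n ⊕ Fin n) (Fin n ⊕ Fin n) ℝ := Matrix.fromBlocks 1 0 0 (c⁻¹ • 1) with hS'
  have hSS' : S * S' = 1 := by
    rw [hS, hS', Matrix.fromBlocks_multiply]
    simp [Matrix.smul_mul, Matrix.mul_smul, smul_smul, mul_inv_cancel₀ hcpos.ne',
      inv_mul_cancel₀ hcpos.ne', Matrix.fromBlocks_one]
  have hS'S : S' * S = 1 := by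
    rw [hS, hS', Matrix.fromBlocks_multiply]
    simp [Matrix.smul_mul, Matrix.mul_smul, smul_smul, inv_mul_cancel₀ hcpos.ne',
      mul_inv_cancel₀ hcpos.ne', Matrix.fromBlocks_one]
  set u : (Matrix (Fin n ⊕ Fin n) (Fin n ⊕ Fin n) ℝ)ˣ := ⟨S, S', hSS', hS'S⟩ with hu
  set L₂ : Matrix (Fin n ⊕ Fin n) (Fin n ⊕ Fin n) ℝ := S * L * S' with hL₂
  have hL₂eq : L₂ = D₀ + c⁻¹ • N₀ := by
    rw [hL₂, hS, hS', hL, hD₀, hN₀, Matrix.fromBlocks_multiply, Matrix.fromBlocks_multiply]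
    rw [Matrix.fromBlocks_smul]
    rw [Matrix.fromBlocks_add]
    congr 1 <;> simp [Matrix.smul_mul, Matrix.mul_smul, smul_smul, mul_inv_cancel₀ hcpos.ne',
      inv_mul_cancel₀ hcpos.ne']
  have hdist : dist (T • L₂) (T • D₀) < δ := by
    rw [dist_eq_norm]
    have h7 : T • L₂ - T • D₀ = (T * c⁻¹) • N₀ := by
      rw [hL₂eq, smul_add, smul_smul]
      abel
    rw [h7, norm_smul, Real.norm_eq_abs, abs_of_pos (by positivity)]
    have h8 : c * δ = T * ‖N₀‖ + δ := by
      rw [hc]; field_simp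
    rw [mul_comm T c⁻¹, mul_assoc, ← div_eq_inv_mul]
    rw [div_lt_iff₀ hcpos]
    nlinarith [norm_nonneg N₀]
  have hE : ‖exp (T • L₂)‖ ≤ 1/2 := by
    have h9 := hδ4 hdist
    rw [dist_eq_norm] at h9
    calc ‖exp (T • L₂)‖
        = ‖(exp (T • L₂) - exp (T • D₀)) + exp (T • D₀)‖ := by rw [sub_add_cancel]
      _ ≤ ‖exp (T • L₂) - exp (T • D₀)‖ + ‖exp (T • D₀)‖ := norm_add_le _ _
      _ ≤ 1/4 + 1/4 := add_le_add h9.le hexpD₀T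
      _ = 1/2 := by norm_num
  set C₀ : ℝ := Real.exp (T * ‖L₂‖) with hC₀
  have hC₀pos : 0 < C₀ := Real.exp_pos _
  have hpowE : ∀ k : ℕ, ‖exp (T • L₂) ^ k‖ ≤ (1/2) ^ k := by
    intro k; induction k with
    | zero => simpa using AugAux.norm_one_le_mat (m := Fin n ⊕ Fin n)
    | succ k ih =>
      rw [pow_succ, pow_succ]
      exact (norm_mul_le _ _).trans (mul_le_mul ih hE (norm_nonneg _) (by positivity))
  set μ : ℝ := Real.log 2 / T with hμ
  have hμpos : 0 < μ := div_pos (Real.log_pos one_lt_two) hTpos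
  refine ⟨‖S'‖ * ‖S‖ * (2 * C₀) + 1, by positivity, μ, hμpos, ?_⟩
  intro t ht
  set k : ℕ := ⌊t / T⌋₊ with hk
  have hkT : (k : ℝ) * T ≤ t := by
    have h11 := Nat.floor_le (by positivity : (0:ℝ) ≤ t / T)
    calc (k:ℝ) * T ≤ (t/T) * T := mul_le_mul_of_nonneg_right h11 hTpos.le
      _ = t := by field_simp
  have hkT2 : t < ((k:ℝ) + 1) * T := by
    have h12 := Nat.lt_floor_add_one (t / T)
    calc t = (t/T) * T := by field_simp
      _ < ((k:ℝ) + 1) * T := mul_lt_mul_of_pos_right h12 hTpos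
  have hsplit : exp (t • L₂) = exp (T • L₂) ^ k * exp ((t - k*T) • L₂) := by
    have h13 : t • L₂ = ((k:ℝ)*T) • L₂ + (t - k*T) • L₂ := by
      rw [← add_smul]; ring_nf
    rw [h13, exp_add_of_commute _ _ (((Commute.refl L₂).smul_left _).smul_right _)]
    congr 1
    have h14 : ((k:ℝ)*T) • L₂ = k • (T • L₂) := by
      rw [mul_smul, Nat.cast_smul_eq_nsmul]
    rw [h14, NormedSpace.exp_nsmul]
  have hrT : t - k*T ≤ T := by nlinarith
  have hr0 : 0 ≤ t - k*T := by linarith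
  have hnorm2 : ‖exp ((t - k*T) • L₂)‖ ≤ C₀ := by
    refine (AugAux.norm_exp_le (AugAux.norm_one_le_mat (m := Fin n ⊕ Fin n)) _).trans ?_
    rw [hC₀]
    apply Real.exp_le_exp.mpr
    rw [norm_smul, Real.norm_eq_abs, abs_of_nonneg hr0]
    nlinarith [norm_nonneg L₂]
  have hhalf : ((1:ℝ)/2) ^ k ≤ 2 * Real.exp (-μ * t) := by
    have h15 : ((1:ℝ)/2) ^ k = Real.exp ((k:ℝ) * Real.log (1/2)) := by
      rw [Real.exp_nat_mul, Real.exp_log (by norm_num : (0:ℝ) < 1/2)]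
    have hlog : Real.log ((1:ℝ)/2) = - Real.log 2 := by
      rw [one_div, Real.log_inv]
    have h16 : (2:ℝ) * Real.exp (-μ * t) = Real.exp (Real.log 2 + -μ * t) := by
      rw [Real.exp_add, Real.exp_log two_pos]
    rw [h15, h16, hlog]
    apply Real.exp_le_exp.mpr
    have hlog2 : 0 < Real.log 2 := Real.log_pos one_lt_two
    have h17 : μ * t = Real.log 2 * (t / T) := by
      rw [hμ]; ring
    have h18 : t / T < (k:ℝ) + 1 := Nat.lt_floor_add_one (t / T)
    nlinarith [h18, hlog2]
  -- conjugate back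
  have hcu : ((u : (Matrix (Fin n ⊕ Fin n) (Fin n ⊕ Fin n) ℝ)ˣ) :
      Matrix (Fin n ⊕ Fin n) (Fin n ⊕ Fin n) ℝ) = S := rfl
  have hcu' : (((u⁻¹ : (Matrix (Fin n ⊕ Fin n) (Fin n ⊕ Fin n) ℝ)ˣ)) :
      Matrix (Fin n ⊕ Fin n) (Fin n ⊕ Fin n) ℝ) = S' := rfl
  have h19 := NormedSpace.exp_units_conj u (t • L)
  rw [hcu, hcu'] at h19
  have h20 : S * (t • L) * S' = t • L₂ := by
    rw [hL₂, mul_smul_comm, smul_mul_assoc]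
  rw [h20] at h19
  have hconj : exp (t • L) = S' * exp (t • L₂) * S := by
    rw [h19]
    simp only [mul_assoc]
    rw [hS'S, mul_one, ← mul_assoc, hS'S, one_mul]
  have hnorm3 : ‖exp (t • L₂)‖ ≤ (1/2) ^ k * C₀ := by
    rw [hsplit]
    exact (norm_mul_le _ _).trans
      (mul_le_mul (hpowE k) hnorm2 (norm_nonneg _) (by positivity))
  have hnorm4 : ‖exp (t • L₂)‖ ≤ 2 * Real.exp (-μ * t) * C₀ :=
    hnorm3.trans (mul_le_mul_of_nonneg_right hhalf hC₀pos.le)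
  calc ‖exp (t • L)‖ = ‖S' * exp (t • L₂) * S‖ := by rw [hconj]
    _ ≤ ‖S' * exp (t • L₂)‖ * ‖S‖ := norm_mul_le _ _
    _ ≤ (‖S'‖ * ‖exp (t • L₂)‖) * ‖S‖ :=
        mul_le_mul_of_nonneg_right (norm_mul_le _ _) (norm_nonneg _)
    _ ≤ (‖S'‖ * (2 * Real.exp (-μ * t) * C₀)) * ‖S‖ := by
        have := mul_le_mul_of_nonneg_left hnorm4 (norm_nonneg S')
        exact mul_le_mul_of_nonneg_right this (norm_nonneg S)
    _ = (‖S'‖ * ‖S‖ * (2 * C₀)) * Real.exp (-μ * t) := by ring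
    _ ≤ (‖S'‖ * ‖S‖ * (2 * C₀) + 1) * Real.exp (-μ * t) := by
        nlinarith [Real.exp_pos (-μ * t)]
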